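/- Let f : X → (0,1) and c : X → ℝ be measurable with |η·c(x)| ≤ 1 for all x and η > 0, and let f' be the multiplicative-weights update of f by c with step η. If ℓ_D(f;y) and ℓ_D(f';y) are finite and c·(f−y) and c² are integrable with respect to D, then ℓ_D(f;y) − ℓ_D(f';y) ≥ η·E[c(x)·(f(x) − y(x))] − η²·E[c(x)²]. -/
import Mathlib


open MeasureTheory

lemma exp_le_one_add_add_sq {t : ℝ} (h : |t| ≤ 1) : Real.exp t ≤ 1 + t + t ^ 2 := by
  have hb := Real.exp_bound h (n := 2) (by norm_num)
  have hsum : (∑ i ∈ Finset.range 2, t ^ i / (Nat.factorial i : ℝ)) = 1 + t := by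
    simp [Finset.sum_range_succ, Nat.factorial]
  rw [hsum] at hb
  have h2 : |t| ^ 2 = t ^ 2 := sq_abs t
  have := abs_le.mp hb
  have hc : ((Nat.succ 2 : ℕ) : ℝ) / ((Nat.factorial 2 : ℕ) * (2:ℕ)) = 3/4 := by
    norm_num [Nat.factorial]
  rw [hc, h2] at this
  nlinarith [sq_nonneg t, this.1, this.2]

/-- Progress of the multiplicative-weights update in expected cross-entropy loss. -/
theorem mw_expected_progress
    {X : Type*} [MeasurableSpace X] (D : Measure X) [IsProbabilityMeasure D]
    (y f c : X → ℝ) (hy : Measurable y) (hy01 : ∀ x, y x = 0 ∨ y x = 1)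
    (hf : Measurable f) (hf01 : ∀ x, f x ∈ Set.Ioo (0 : ℝ) 1)
    (hc : Measurable c) (η : ℝ) (hη : 0 < η) (hηc : ∀ x, |η * c x| ≤ 1)
    (f' : X → ℝ)
    (hf' : ∀ x, f' x = f x * Real.exp (-η * c x) / (1 - f x + f x * Real.exp (-η * c x)))
    (hℓf : Integrable (fun x => -(y x) * Real.log (f x) - (1 - y x) * Real.log (1 - f x)) D)
    (hℓf' : Integrable (fun x => -(y x) * Real.log (f' x) - (1 - y x) * Real.log (1 - f' x)) D)
    (hint₁ : Integrable (fun x => c x * (f x - y x)) D)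
    (hint₂ : Integrable (fun x => (c x)^2) D) :
    (∫ x, (-(y x) * Real.log (f x) - (1 - y x) * Real.log (1 - f x)) ∂D)
      - (∫ x, (-(y x) * Real.log (f' x) - (1 - y x) * Real.log (1 - f' x)) ∂D)
      ≥ η * ∫ x, c x * (f x - y x) ∂D - η^2 * ∫ x, (c x)^2 ∂D := by
  have key : ∀ x, η * (c x * (f x - y x)) - η ^ 2 * (c x) ^ 2 ≤
      (-(y x) * Real.log (f x) - (1 - y x) * Real.log (1 - f x))
      - (-(y x) * Real.log (f' x) - (1 - y x) * Real.log (1 - f' x)) := by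
    intro x
    obtain ⟨hf0, hf1⟩ := hf01 x
    set t : ℝ := -η * c x with ht
    have habs : |t| ≤ 1 := by rw [ht]; rw [abs_mul, abs_neg] at *; simpa [abs_mul] using hηc x
    have hexp : Real.exp t ≤ 1 + t + t ^ 2 := exp_le_one_add_add_sq habs
    have hfe : 0 < f x * Real.exp t := mul_pos hf0 (Real.exp_pos t)
    have h1f : 0 < 1 - f x := by linarith
    set Z : ℝ := 1 - f x + f x * Real.exp t with hZ
    have hZpos : 0 < Z := by positivity
    have hlogf' : Real.log (f' x) = Real.log (f x) + t - Real.log Z := by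
      rw [hf' x, Real.log_div (ne_of_gt hfe) (ne_of_gt hZpos),
        Real.log_mul (ne_of_gt hf0) (Real.exp_ne_zero t), Real.log_exp]
    have h1f' : 1 - f' x = (1 - f x) / Z := by
      rw [hf' x, ← ht, one_sub_div (ne_of_gt hZpos)]
      congr 1
      rw [hZ]; ring
    have hlog1f' : Real.log (1 - f' x) = Real.log (1 - f x) - Real.log Z := by
      rw [h1f', Real.log_div (ne_of_gt h1f) (ne_of_gt hZpos)]
    rw [hlogf', hlog1f']
    -- LHS - simplifies to y x * t - log Z on the right
    have hlogZ : Real.log Z ≤ Z - 1 := Real.log_le_sub_one_of_pos hZpos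
    have hZ1 : Z - 1 ≤ f x * t + f x * t ^ 2 := by
      have := mul_le_mul_of_nonneg_left hexp hf0.le
      nlinarith
    have ht2 : t ^ 2 = η ^ 2 * (c x) ^ 2 := by rw [ht]; ring
    have hft2 : f x * t ^ 2 ≤ t ^ 2 := by nlinarith [sq_nonneg t]
    have hfinal : Real.log Z ≤ f x * t + t ^ 2 := by linarith
    have hyt : y x * t = -(η * (c x * y x)) := by rw [ht]; ring
    nlinarith [hfinal, ht2]
  have hd : Integrable (fun x => (-(y x) * Real.log (f x) - (1 - y x) * Real.log (1 - f x))
      - (-(y x) * Real.log (f' x) - (1 - y x) * Real.log (1 - f' x))) D := hℓf.sub hℓf'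
  have hr : Integrable (fun x => η * (c x * (f x - y x)) - η ^ 2 * (c x) ^ 2) D :=
    (hint₁.const_mul η).sub (hint₂.const_mul (η ^ 2))
  have hmono := integral_mono hr hd key
  rw [← integral_sub hℓf hℓf']
  rw [integral_sub (hint₁.const_mul η) (hint₂.const_mul (η ^ 2)),
    integral_const_mul, integral_const_mul] at hmono
  exact hmono
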